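/- There exists a constant C > 0 such that for every real k ≥ 1, all positive integers m, r with r ≤ m, and all integers α, β with 1 ≤ β ≤ α/2 ≤ r/2, the following holds. If k ≥ mr, then M(α,β) ≤ 2^{C·r} · (k²r/m)^{r/2}. If k < mr, then M(α,β) ≤ 2^{C·r} · max{ (r / ln(2emr/k))^{2r} , (k²r/m)^{r/2} }. -/

import Mathlib

open scoped BigOperators
noncomputable section

namespace FH

def Mfun (m r : ℕ) (k : ℝ) (α β : ℕ) : ℝ :=
  ((m:ℝ)/β)^β * (k*α/m)^α * ((α:ℝ) - 2*β)^(2*r - 2*α)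

def Nfun (m r : ℕ) (k : ℝ) (α β : ℕ) : ℝ :=
  ((m:ℝ)/β)^β * (k*α/m)^α * ((α:ℝ) - β)^(r - α)

lemma log_le_div_e {x : ℝ} (hx : 0 < x) : Real.log x ≤ x / Real.exp 1 := by
  have h := Real.log_le_sub_one_of_pos (show 0 < x / Real.exp 1 by positivity)
  have h2 : Real.log (x / Real.exp 1) = Real.log x - 1 := by
    rw [Real.log_div (ne_of_gt hx) (Real.exp_ne_zero 1), Real.log_exp]
  rw [h2] at h; linarith

lemma pow_div_le_exp {c : ℝ} (hc : 0 < c) (β : ℕ) (hβ : 1 ≤ β) :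
    (c/β)^β ≤ Real.exp (c / Real.exp 1) := by
  have hβ' : (0:ℝ) < β := by exact_mod_cast hβ
  have hcb : 0 < c/β := by positivity
  calc (c/β)^β = Real.exp (Real.log (c/β)) ^ β := by rw [Real.exp_log hcb]
    _ = Real.exp (β * Real.log (c/β)) := by rw [← Real.exp_nat_mul]
    _ ≤ Real.exp (c/Real.exp 1) := by
        apply Real.exp_le_exp.2
        have h := log_le_div_e hcb
        calc (β:ℝ) * Real.log (c/β) ≤ β * ((c/β)/Real.exp 1) :=
              mul_le_mul_of_nonneg_left h hβ'.le
          _ = c / Real.exp 1 := by field_simp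

lemma sq_rpow_half (x : ℝ) (hx : 0 ≤ x) (r : ℕ) : (x^2) ^ ((r:ℝ)/2) = x ^ r := by
  rw [← Real.rpow_natCast x 2, ← Real.rpow_mul hx]
  push_cast
  rw [show (2:ℝ)*((r:ℝ)/2) = (r:ℝ) by ring, Real.rpow_natCast]

lemma two_rpow_ten (r : ℕ) : (2:ℝ)^((10:ℝ)*r) = 1024^r := by
  rw [Real.rpow_mul (by norm_num), show ((2:ℝ)^(10:ℝ)) = 1024 by
    rw [show (10:ℝ) = ((10:ℕ):ℝ) by norm_num, Real.rpow_natCast]; norm_num]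
  exact Real.rpow_natCast _ r

lemma key (m r α β : ℕ) (k t : ℝ) (hm : 0 < m) (hβ : 1 ≤ β) (hβα : 2*β ≤ α)
    (hαr : α ≤ r) (hk : 0 < k) (ht : 0 < t) :
    Mfun m r k α β ≤ Real.exp ((m:ℝ) * Real.exp (-(2*t)) / Real.exp 1) *
      (max (k * r * Real.exp t / m) ((2*r/(Real.exp 1 * t))^2)) ^ r := by
  have hm' : (0:ℝ) < m := by exact_mod_cast hm
  have hβ' : (0:ℝ) < β := by exact_mod_cast hβ
  have hα2 : 2 ≤ α := le_trans (by omega) hβα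
  have hr2 : 2 ≤ r := le_trans hα2 hαr
  have hr' : (0:ℝ) < r := by exact_mod_cast (by omega : 0 < r)
  have hα' : (0:ℝ) < α := by exact_mod_cast (by omega : 0 < α)
  have hαr' : (α:ℝ) ≤ r := by exact_mod_cast hαr
  have hE : (0:ℝ) < Real.exp 1 := Real.exp_pos 1
  set E1 : ℝ := Real.exp ((m:ℝ) * Real.exp (-(2*t)) / Real.exp 1) with hE1
  have hE1pos : 0 < E1 := Real.exp_pos _
  have c1 : (0:ℝ) < (m:ℝ) * Real.exp (-(2*t)) := by positivity
  have h1 : ((m:ℝ)/β)^β ≤ E1 * Real.exp t ^ (2*β) := by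
    have e1 : ((m:ℝ)/β) = ((m:ℝ)*Real.exp (-(2*t))/β) * Real.exp t^2 := by
      have h2t : Real.exp t ^ 2 = Real.exp (2*t) := by
        rw [← Real.exp_nat_mul]; norm_num
      rw [h2t, div_mul_eq_mul_div, mul_assoc, ← Real.exp_add]
      norm_num
    rw [e1, mul_pow, ← pow_mul]
    exact mul_le_mul_of_nonneg_right (pow_div_le_exp c1 β hβ) (by positivity)
  have h2 : (k*α/m)^α ≤ (k*(r:ℝ)/m)^α := by
    gcongr
  set g := α - 2*β with hgdef
  have h2β : 2*β ≤ α := hβα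
  have hgR : (g:ℝ) = (α:ℝ) - 2*β := by
    rw [hgdef, Nat.cast_sub h2β]; push_cast; ring
  set n := 2*r - 2*α with hndef
  have hnval : n = 2*(r - α) := by omega
  have hn2r : (n:ℝ) ≤ 2*r := by
    have h : n ≤ 2*r := by omega
    calc (n:ℝ) ≤ ((2*r : ℕ):ℝ) := by exact_mod_cast h
      _ = 2*(r:ℝ) := by push_cast; ring
  have hYb : (0:ℝ) < 2*(r:ℝ)/(Real.exp 1 * t) := by positivity
  have h3 : (g:ℝ)^n ≤ (2*(r:ℝ)/(Real.exp 1 * t))^n * Real.exp t ^ g := by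
    rcases Nat.eq_zero_or_pos n with h0 | hnpos
    · simp only [h0, pow_zero, one_mul]
      exact one_le_pow₀ (Real.one_le_exp ht.le)
    · rcases Nat.eq_zero_or_pos g with hg0 | hgpos
      · rw [hg0]
        push_cast
        rw [zero_pow (by omega)]
        positivity
      · have hgR' : (0:ℝ) < g := by exact_mod_cast hgpos
        have hnR : (0:ℝ) < n := by exact_mod_cast hnpos
        have key1 : Real.log ((g:ℝ)) ≤ Real.log (2*(r:ℝ)/(Real.exp 1*t)) + t*g/n := by
          have h5 : Real.log ((g:ℝ)*t/n) ≤ (g:ℝ)*t/n - 1 :=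
            Real.log_le_sub_one_of_pos (by positivity)
          have hsplit : Real.log ((g:ℝ)) =
              Real.log ((g:ℝ)*t/n) + 1 + Real.log ((n:ℝ)/(Real.exp 1*t)) := by
            rw [show (1:ℝ) = Real.log (Real.exp 1) from (Real.log_exp 1).symm]
            rw [← Real.log_mul (by positivity) (Real.exp_ne_zero 1),
                ← Real.log_mul (by positivity) (by positivity)]
            congr 1
            field_simp
            ring
            simp only [Real.log_exp]
          have hmono : Real.log ((n:ℝ)/(Real.exp 1*t)) ≤
              Real.log (2*(r:ℝ)/(Real.exp 1*t)) := by
            apply Real.log_le_log (by positivity)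
            gcongr
          rw [hsplit]
          have : (g:ℝ)*t/n = t*g/n := by ring
          linarith [this ▸ h5]
        calc (g:ℝ)^n = Real.exp ((n:ℝ) * Real.log g) := by
              rw [Real.exp_nat_mul, Real.exp_log hgR']
          _ ≤ Real.exp ((n:ℝ) * (Real.log (2*(r:ℝ)/(Real.exp 1*t)) + t*g/n)) := by
              apply Real.exp_le_exp.2
              exact mul_le_mul_of_nonneg_left key1 hnR.le
          _ = Real.exp ((n:ℝ) * Real.log (2*(r:ℝ)/(Real.exp 1*t))) * Real.exp ((g:ℝ)*t) := by
              rw [← Real.exp_add]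
              congr 1
              field_simp
          _ = (2*(r:ℝ)/(Real.exp 1 * t))^n * Real.exp t ^ g := by
              rw [Real.exp_nat_mul, Real.exp_log hYb, Real.exp_nat_mul]
  -- combine
  have hMeq : Mfun m r k α β = ((m:ℝ)/β)^β * (k*α/m)^α * ((g:ℝ))^n := by
    rw [Mfun, hgR, hndef]
  set X : ℝ := k * r * Real.exp t / m with hX
  set Y : ℝ := 2*(r:ℝ)/(Real.exp 1 * t) with hY
  set W : ℝ := max X (Y^2) with hW
  have hXpos : 0 < X := by positivity
  have hWpos : 0 < W := lt_max_of_lt_left hXpos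
  have step : Mfun m r k α β ≤ E1 * ((k*(r:ℝ)/m) * Real.exp t)^α * Y^n := by
    rw [hMeq]
    calc ((m:ℝ)/β)^β * (k*α/m)^α * ((g:ℝ))^n
        ≤ (E1 * Real.exp t ^ (2*β)) * (k*(r:ℝ)/m)^α * (Y^n * Real.exp t ^ g) := by
          have hA2 : (0:ℝ) ≤ (k*α/m)^α := by positivity
          have hgn : (0:ℝ) ≤ (g:ℝ)^n := by positivity
          apply mul_le_mul (mul_le_mul h1 h2 hA2 (by positivity)) h3 hgn (by positivity)
      _ = E1 * ((k*(r:ℝ)/m))^α * (Real.exp t ^ (2*β) * Real.exp t ^ g) * Y^n := by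
          ring
      _ = E1 * ((k*(r:ℝ)/m) * Real.exp t)^α * Y^n := by
          rw [← pow_add, show 2*β + g = α by omega, mul_pow]
          ring
  have hXeq : (k*(r:ℝ)/m) * Real.exp t = X := by rw [hX]; ring
  rw [hXeq] at step
  calc Mfun m r k α β ≤ E1 * X^α * Y^n := step
    _ ≤ E1 * W^α * (Y^2)^(r-α) := by
        rw [hnval, pow_mul]
        have h6 : X ≤ W := le_max_left _ _
        gcongr
    _ ≤ E1 * W^α * W^(r-α) := by
        have h7 : Y^2 ≤ W := le_max_right _ _
        gcongr
    _ = E1 * W^r := by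
        rw [mul_assoc, ← pow_add, show α + (r-α) = r by omega]
end FH

namespace FH

lemma rpow_half_sq (x : ℝ) (hx : 0 ≤ x) (r : ℕ) : (x ^ ((r:ℝ)/2))^2 = x ^ r := by
  rw [← Real.rpow_natCast (x ^ ((r:ℝ)/2)) 2, ← Real.rpow_mul hx]
  push_cast
  rw [show (r:ℝ)/2*2 = (r:ℝ) by ring, Real.rpow_natCast]

lemma max_pow_le (a b : ℝ) (n : ℕ) : (max a b)^n ≤ max (a^n) (b^n) := by
  rcases le_total a b with h|h
  · rw [max_eq_right h]; exact le_max_right _ _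
  · rw [max_eq_left h]; exact le_max_left _ _

lemma case1 (m r α β : ℕ) (k : ℝ) (hm : 0 < m) (hrm : r ≤ m) (hβ : 1 ≤ β)
    (hβα : 2*β ≤ α) (hαr : α ≤ r) (hk : 1 ≤ k) (hkmr : (m:ℝ)*r ≤ k) :
    Mfun m r k α β ≤ Real.exp 1 ^ r * ((k^2*r/m) ^ ((r:ℝ)/2)) := by
  have hm' : (0:ℝ) < m := by exact_mod_cast hm
  have hr2 : 2 ≤ r := le_trans (le_trans (by omega) hβα) hαr
  have hr' : (0:ℝ) < r := by exact_mod_cast (by omega : 0 < r)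
  have hβ' : (0:ℝ) < β := by exact_mod_cast hβ
  have hk0 : (0:ℝ) < k := lt_of_lt_of_le one_pos hk
  have hβα' : 2*(β:ℝ) ≤ α := by exact_mod_cast hβα
  have hαr' : (α:ℝ) ≤ r := by exact_mod_cast hαr
  have hrm' : (r:ℝ) ≤ m := by exact_mod_cast hrm
  have hγ0 : (0:ℝ) ≤ (α:ℝ) - 2*β := by linarith
  have hγr : (α:ℝ) - 2*β ≤ (r:ℝ) := by linarith
  have h1 : Mfun m r k α β ≤ ((m:ℝ)/β)^β * (k*r/m)^α * ((r:ℝ))^(2*r-2*α) := by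
    rw [Mfun]
    gcongr
  have hbase : ((r:ℝ))^2 ≤ k*(r:ℝ)/m := by
    have he : ((r:ℝ))^2 = ((m:ℝ)*r)*r/m := by field_simp
    rw [he]
    gcongr
  have h2 : (k*(r:ℝ)/m)^α * ((r:ℝ))^(2*r-2*α) ≤ (k*(r:ℝ)/m)^r := by
    have he1 : 2*r-2*α = 2*(r-α) := by omega
    calc (k*(r:ℝ)/m)^α * ((r:ℝ))^(2*r-2*α)
        = (k*(r:ℝ)/m)^α * (((r:ℝ))^2)^(r-α) := by rw [he1, pow_mul]
      _ ≤ (k*(r:ℝ)/m)^α * ((k*(r:ℝ)/m))^(r-α) := by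
          gcongr
      _ = (k*(r:ℝ)/m)^r := by rw [← pow_add, show α + (r-α) = r by omega]
  have hM1 : Mfun m r k α β ≤ ((m:ℝ)/β)^β * (k*(r:ℝ)/m)^r := by
    calc Mfun m r k α β ≤ ((m:ℝ)/β)^β * (k*r/m)^α * ((r:ℝ))^(2*r-2*α) := h1
      _ = ((m:ℝ)/β)^β * ((k*r/m)^α * ((r:ℝ))^(2*r-2*α)) := by ring
      _ ≤ ((m:ℝ)/β)^β * (k*(r:ℝ)/m)^r :=
          mul_le_mul_of_nonneg_left h2 (by positivity)
  set S : ℝ := ((m:ℝ)/β)^β * (k*(r:ℝ)/m)^r with hSdef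
  set Z : ℝ := k^2*(r:ℝ)/m with hZdef
  have hZpos : 0 < Z := by positivity
  set T : ℝ := Real.exp 1 ^ r * Z ^ ((r:ℝ)/2) with hTdef
  have hS0 : 0 ≤ S := by positivity
  have hT0 : 0 ≤ T := by positivity
  have hkr2 : (k*(r:ℝ)/m)^2 = Z * ((r:ℝ)/m) := by rw [hZdef]; field_simp
  have hmain : ((m:ℝ)/β)^(2*β) * ((r:ℝ)/m)^r ≤ (Real.exp 1)^(2*r) := by
    have hmix : ((m:ℝ)/β) * ((r:ℝ)/m) = (r:ℝ)/β := by field_simp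
    have hsplit : ((m:ℝ)/β)^(2*β) * ((r:ℝ)/m)^r
        = ((r:ℝ)/β)^(2*β) * ((r:ℝ)/m)^(r - 2*β) := by
      calc ((m:ℝ)/β)^(2*β) * ((r:ℝ)/m)^r
          = ((m:ℝ)/β)^(2*β) * (((r:ℝ)/m)^(2*β) * ((r:ℝ)/m)^(r-2*β)) := by
            rw [← pow_add, show 2*β + (r - 2*β) = r by omega]
        _ = (((m:ℝ)/β) * ((r:ℝ)/m))^(2*β) * ((r:ℝ)/m)^(r-2*β) := by
            rw [mul_pow]; ring
        _ = ((r:ℝ)/β)^(2*β) * ((r:ℝ)/m)^(r-2*β) := by rw [hmix]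
    rw [hsplit]
    have hb1 : ((r:ℝ)/m)^(r-2*β) ≤ 1 := by
      apply pow_le_one₀ (by positivity)
      rw [div_le_one hm']
      exact hrm'
    have hb2 : ((r:ℝ)/β)^(2*β) ≤ (Real.exp 1)^(2*r) := by
      calc ((r:ℝ)/β)^(2*β) = (((r:ℝ)/β)^β)^2 := by
            rw [show 2*β = β*2 by ring, pow_mul]
        _ ≤ (Real.exp ((r:ℝ)/Real.exp 1))^2 := by
            have h := pow_div_le_exp hr' β hβ
            gcongr
        _ = Real.exp (2*((r:ℝ)/Real.exp 1)) := by
            rw [← Real.exp_nat_mul]; norm_num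
        _ ≤ (Real.exp 1)^(2*r) := by
            rw [← Real.exp_nat_mul]
            apply Real.exp_le_exp.2
            push_cast
            have : (r:ℝ)/Real.exp 1 ≤ r :=
              div_le_self hr'.le (Real.one_le_exp (by norm_num))
            linarith
    calc ((r:ℝ)/β)^(2*β) * ((r:ℝ)/m)^(r-2*β)
        ≤ (Real.exp 1)^(2*r) * 1 :=
          mul_le_mul hb2 hb1 (by positivity) (by positivity)
      _ = (Real.exp 1)^(2*r) := mul_one _
  have hTsq : T^2 = (Real.exp 1)^(2*r) * Z^r := by
    rw [hTdef, mul_pow, ← pow_mul, show r*2 = 2*r by ring, rpow_half_sq Z hZpos.le r]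
  have hsq : S^2 ≤ T^2 := by
    have e1 : ((k*(r:ℝ)/m)^r)^2 = ((k*(r:ℝ)/m)^2)^r := by
      rw [← pow_mul, ← pow_mul, Nat.mul_comm]
    have e2 : (((m:ℝ)/β)^β) ^ 2 = ((m:ℝ)/β)^(2*β) := by rw [← pow_mul, Nat.mul_comm]
    calc S^2 = (((m:ℝ)/β)^β) ^2 * ((k*(r:ℝ)/m)^r)^2 := by rw [hSdef, mul_pow]
      _ = ((m:ℝ)/β)^(2*β) * ((k*(r:ℝ)/m)^2)^r := by rw [e1, e2]
      _ = ((m:ℝ)/β)^(2*β) * (Z^r * ((r:ℝ)/m)^r) := by rw [hkr2, mul_pow]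
      _ = ((m:ℝ)/β)^(2*β) * ((r:ℝ)/m)^r * Z^r := by ring
      _ ≤ (Real.exp 1)^(2*r) * Z^r :=
          mul_le_mul_of_nonneg_right hmain (by positivity)
      _ = T^2 := hTsq.symm
  have hST : S ≤ T := by nlinarith
  calc Mfun m r k α β ≤ S := hM1
    _ ≤ T := hST
    _ = Real.exp 1 ^ r * ((k^2*r/m) ^ ((r:ℝ)/2)) := by rw [hTdef, hZdef]

end FH

namespace FH

set_option maxHeartbeats 2000000 in
lemma case2 (m r α β : ℕ) (k : ℝ) (hm : 0 < m) (hrm : r ≤ m) (hβ : 1 ≤ β)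
    (hβα : 2*β ≤ α) (hαr : α ≤ r) (hk : 1 ≤ k) (hkmr : k < (m:ℝ)*r) :
    Mfun m r k α β ≤ Real.exp 1 ^ r * ((32/Real.exp 1)^2)^r *
      max (((r:ℝ) / Real.log (2 * Real.exp 1 * m * r / k))^(2*r))
        ((k^2 * r / m)^((r:ℝ)/2)) := by
  have hm' : (0:ℝ) < m := by exact_mod_cast hm
  have hr2 : 2 ≤ r := le_trans (le_trans (by omega) hβα) hαr
  have hr' : (0:ℝ) < r := by exact_mod_cast (by omega : 0 < r)
  have hβ' : (0:ℝ) < β := by exact_mod_cast hβ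
  have hk0 : (0:ℝ) < k := lt_of_lt_of_le one_pos hk
  have hrm' : (r:ℝ) ≤ m := by exact_mod_cast hrm
  have hE : (0:ℝ) < Real.exp 1 := Real.exp_pos 1
  have hargpos : (0:ℝ) < 2*Real.exp 1*(m:ℝ)*r/k := by positivity
  obtain ⟨L, hLdef⟩ : ∃ L : ℝ, L = Real.log (2 * Real.exp 1 * (m:ℝ) * r / k) :=
    ⟨_, rfl⟩
  rw [← hLdef]
  have hL1 : 1 ≤ L := by
    rw [hLdef, Real.le_log_iff_exp_le hargpos, le_div_iff₀ hk0]
    nlinarith [Real.exp_pos 1, mul_pos hm' hr']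
  have hLpos : 0 < L := lt_of_lt_of_le one_pos hL1
  have hexpL : Real.exp L = 2*Real.exp 1*(m:ℝ)*r/k := by
    rw [hLdef]; exact Real.exp_log hargpos
  have hA0 : (0:ℝ) ≤ ((r:ℝ)/L)^(2*r) := by positivity
  have hZpos : (0:ℝ) < k^2*(r:ℝ)/m := by positivity
  have hc1 : (1:ℝ) ≤ (32/Real.exp 1)^2 := by
    have h32 : (1:ℝ) ≤ 32/Real.exp 1 := by
      rw [le_div_iff₀ hE]
      nlinarith [Real.exp_one_lt_d9]
    nlinarith
  by_cases hcase : L ≤ 8 * Real.log ((m:ℝ)/r)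
  · -- Subcase 2a : t = log(m/r)/2
    have hlmr : (0:ℝ) < Real.log ((m:ℝ)/r) := by linarith
    have hmrpos : (0:ℝ) < (m:ℝ)/r := by positivity
    set t := Real.log ((m:ℝ)/r) / 2 with htdef
    have ht : 0 < t := by positivity
    have hexp2t : Real.exp t * Real.exp t = (m:ℝ)/r := by
      rw [htdef, ← Real.exp_add,
        show Real.log ((m:ℝ)/r)/2 + Real.log ((m:ℝ)/r)/2 = Real.log ((m:ℝ)/r) by ring,
        Real.exp_log hmrpos]
    have h2t : Real.exp (2*t) = (m:ℝ)/r := by rw [two_mul, Real.exp_add, hexp2t]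
    have hneg : Real.exp (-(2*t)) = (r:ℝ)/m := by
      rw [Real.exp_neg, h2t, inv_div]
    have hkey := key m r α β k t hm hβ hβα hαr hk0 ht
    have hE1le : Real.exp ((m:ℝ)*Real.exp (-(2*t))/Real.exp 1) ≤ Real.exp 1 ^ r := by
      rw [hneg]
      have harg : (m:ℝ)*((r:ℝ)/m)/Real.exp 1 ≤ (r:ℝ) := by
        rw [show (m:ℝ)*((r:ℝ)/m) = (r:ℝ) by field_simp]
        exact div_le_self hr'.le (Real.one_le_exp zero_le_one)
      calc Real.exp ((m:ℝ)*((r:ℝ)/m)/Real.exp 1) ≤ Real.exp (r:ℝ) :=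
            Real.exp_le_exp.2 harg
        _ = Real.exp 1 ^ r := by rw [← Real.exp_nat_mul, mul_one]
    set X := k*(r:ℝ)*Real.exp t/m with hXdef
    have hX0 : 0 ≤ X := by positivity
    have hX2 : X^2 = k^2*(r:ℝ)/m := by
      have hsq : Real.exp t ^2 = (m:ℝ)/r := by rw [sq, hexp2t]
      rw [hXdef, div_pow, mul_pow, mul_pow, hsq]
      field_simp
    have hXr : X^r = (k^2*(r:ℝ)/m) ^ ((r:ℝ)/2) := by
      rw [← hX2]
      exact (sq_rpow_half X hX0 r).symm
    have htL : L/16 ≤ t := by rw [htdef]; linarith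
    have hY : (2*(r:ℝ)/(Real.exp 1*t))^2 ≤ (32/Real.exp 1)^2*((r:ℝ)/L)^2 := by
      have h1 : 2*(r:ℝ)/(Real.exp 1*t) ≤ (32/Real.exp 1)*((r:ℝ)/L) := by
        have hpos16 : (0:ℝ) < Real.exp 1 * (L/16) := by positivity
        calc 2*(r:ℝ)/(Real.exp 1*t) ≤ 2*(r:ℝ)/(Real.exp 1*(L/16)) := by
              gcongr
          _ = (32/Real.exp 1)*((r:ℝ)/L) := by field_simp; ring
      calc (2*(r:ℝ)/(Real.exp 1*t))^2 ≤ ((32/Real.exp 1)*((r:ℝ)/L))^2 := by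
            have hnn : (0:ℝ) ≤ 2*(r:ℝ)/(Real.exp 1*t) := by positivity
            exact pow_le_pow_left₀ hnn h1 2
        _ = (32/Real.exp 1)^2*((r:ℝ)/L)^2 := by rw [mul_pow]
    have hmax : max X ((2*(r:ℝ)/(Real.exp 1*t))^2)
        ≤ max X ((32/Real.exp 1)^2*((r:ℝ)/L)^2) := max_le_max (le_refl X) hY
    have hWr : (max X ((2*(r:ℝ)/(Real.exp 1*t))^2))^r
        ≤ max (X^r) (((32/Real.exp 1)^2*((r:ℝ)/L)^2)^r) := by
      refine le_trans (pow_le_pow_left₀ ?_ hmax r) (max_pow_le _ _ r)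
      exact le_trans hX0 (le_max_left _ _)
    have hcr : ((32/Real.exp 1)^2*((r:ℝ)/L)^2)^r
        = ((32/Real.exp 1)^2)^r * ((r:ℝ)/L)^(2*r) := by
      rw [mul_pow, ← pow_mul, ← pow_mul]
    have hfin : max (X^r) (((32/Real.exp 1)^2)^r * ((r:ℝ)/L)^(2*r))
        ≤ ((32/Real.exp 1)^2)^r *
          max (((r:ℝ)/L)^(2*r)) ((k^2*(r:ℝ)/m) ^ ((r:ℝ)/2)) := by
      have hc1r : (1:ℝ) ≤ ((32/Real.exp 1)^2)^r := one_le_pow₀ hc1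
      apply max_le
      · rw [hXr]
        calc (k^2*(r:ℝ)/m) ^ ((r:ℝ)/2)
            ≤ max (((r:ℝ)/L)^(2*r)) ((k^2*(r:ℝ)/m) ^ ((r:ℝ)/2)) := le_max_right _ _
          _ ≤ ((32/Real.exp 1)^2)^r *
              max (((r:ℝ)/L)^(2*r)) ((k^2*(r:ℝ)/m) ^ ((r:ℝ)/2)) := by
              apply le_mul_of_one_le_left ?_ hc1r
              positivity
      · exact mul_le_mul_of_nonneg_left (le_max_left _ _) (by positivity)
    calc Mfun m r k α β
        ≤ Real.exp ((m:ℝ)*Real.exp (-(2*t))/Real.exp 1) *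
          (max X ((2*(r:ℝ)/(Real.exp 1*t))^2))^r := hkey
      _ ≤ Real.exp 1 ^ r * (((32/Real.exp 1)^2)^r *
          max (((r:ℝ)/L)^(2*r)) ((k^2*(r:ℝ)/m) ^ ((r:ℝ)/2))) := by
          apply mul_le_mul hE1le ?_ (by positivity) (by positivity)
          refine le_trans hWr (le_trans ?_ hfin)
          rw [hcr]
      _ = Real.exp 1 ^ r * ((32/Real.exp 1)^2)^r *
          max (((r:ℝ)/L)^(2*r)) ((k^2*(r:ℝ)/m) ^ ((r:ℝ)/2)) := by ring
  · -- Subcase 2b : t = L/2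
    push_neg at hcase
    have ht : 0 < L/2 := by linarith
    have hexpt2 : Real.exp (L/2) * Real.exp (L/2) = Real.exp L := by
      rw [← Real.exp_add, show L/2 + L/2 = L by ring]
    have h2t : Real.exp (2*(L/2)) = Real.exp L := by
      rw [two_mul, Real.exp_add, hexpt2]
    have hneg : Real.exp (-(2*(L/2))) = k/(2*Real.exp 1*(m:ℝ)*r) := by
      rw [Real.exp_neg, h2t, hexpL, inv_div]
    have hkval : k = 2*Real.exp 1*(m:ℝ)*r/Real.exp L := by
      rw [eq_div_iff (Real.exp_ne_zero L), hexpL]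
      field_simp
    have hkm : k/(m:ℝ) = 2*Real.exp 1*(r:ℝ)/Real.exp L := by
      rw [hkval]
      field_simp
    have hkb : k ≤ 2*Real.exp 1*(r:ℝ)^2 := by
      have hmb : (m:ℝ) ≤ r * Real.exp (L/8) := by
        have h2 : Real.exp (Real.log ((m:ℝ)/r)) ≤ Real.exp (L/8) :=
          Real.exp_le_exp.2 (by linarith)
        rw [Real.exp_log (by positivity : (0:ℝ) < (m:ℝ)/r)] at h2
        calc (m:ℝ) = ((m:ℝ)/r)*r := by field_simp
          _ ≤ Real.exp (L/8) * r := mul_le_mul_of_nonneg_right h2 hr'.le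
          _ = r * Real.exp (L/8) := by ring
      have hee : Real.exp (L/8) ≤ Real.exp L := Real.exp_le_exp.2 (by linarith)
      calc k = 2*Real.exp 1*(m:ℝ)*r/Real.exp L := hkval
        _ ≤ 2*Real.exp 1*(r*Real.exp (L/8))*r/Real.exp L := by gcongr
        _ = 2*Real.exp 1*(r:ℝ)^2 * (Real.exp (L/8)/Real.exp L) := by ring
        _ ≤ 2*Real.exp 1*(r:ℝ)^2 * 1 := by
            apply mul_le_mul_of_nonneg_left ?_ (by positivity)
            rw [div_le_one (Real.exp_pos L)]
            exact hee
        _ = 2*Real.exp 1*(r:ℝ)^2 := mul_one _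
    have hkey := key m r α β k (L/2) hm hβ hβα hαr hk0 ht
    have hone : (1:ℝ) ≤ Real.exp 1 := Real.one_le_exp zero_le_one
    have hE1le : Real.exp ((m:ℝ)*Real.exp (-(2*(L/2)))/Real.exp 1) ≤ Real.exp 1 ^ r := by
      rw [hneg]
      have hq : (m:ℝ) * (k/(2*Real.exp 1*(m:ℝ)*r)) = k/(2*Real.exp 1*r) := by
        field_simp
      have hp : (0:ℝ) ≤ 2*Real.exp 1*(r:ℝ)^2*(Real.exp 1 - 1) :=
        mul_nonneg (by positivity) (sub_nonneg.2 hone)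
      have harg : (m:ℝ)*(k/(2*Real.exp 1*(m:ℝ)*r))/Real.exp 1 ≤ (r:ℝ) := by
        rw [hq, div_div, div_le_iff₀ (by positivity)]
        nlinarith [hkb, hp]
      exact le_trans (Real.exp_le_exp.2 harg) (by rw [← Real.exp_nat_mul, mul_one])
    have hXval : k*(r:ℝ)*Real.exp (L/2)/m = 2*Real.exp 1*(r:ℝ)^2/Real.exp (L/2) := by
      have he2 : k*(r:ℝ)*Real.exp (L/2)/m = (k/m)*r*Real.exp (L/2) := by ring
      rw [he2, hkm, ← hexpt2]
      field_simp
    have hlog : Real.exp 1 * (L/4) ≤ Real.exp (L/4) := by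
      have h1 : Real.log (L/4) ≤ L/4 - 1 := Real.log_le_sub_one_of_pos (by positivity)
      have h2 : L/4 = Real.exp (Real.log (L/4)) := (Real.exp_log (by positivity)).symm
      calc Real.exp 1 * (L/4) = Real.exp 1 * Real.exp (Real.log (L/4)) := by rw [← h2]
        _ = Real.exp (1 + Real.log (L/4)) := (Real.exp_add _ _).symm
        _ ≤ Real.exp (L/4) := Real.exp_le_exp.2 (by linarith)
    have hsqL : Real.exp 1^2 * L^2 ≤ 16 * Real.exp (L/2) := by
      have h3 : Real.exp (L/4) * Real.exp (L/4) = Real.exp (L/2) := by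
        rw [← Real.exp_add, show L/4 + L/4 = L/2 by ring]
      have h4 : (Real.exp 1 * (L/4)) * (Real.exp 1 * (L/4)) ≤
          Real.exp (L/4) * Real.exp (L/4) :=
        mul_le_mul hlog hlog (by positivity) (Real.exp_pos _).le
      rw [h3] at h4
      nlinarith [h4]
    have hX : k*(r:ℝ)*Real.exp (L/2)/m ≤ (32/Real.exp 1)*((r:ℝ)/L)^2 := by
      rw [hXval, div_le_iff₀ (Real.exp_pos (L/2))]
      have expand : (32/Real.exp 1)*((r:ℝ)/L)^2*Real.exp (L/2)
          = 32*(r:ℝ)^2*Real.exp (L/2)/(Real.exp 1*L^2) := by field_simp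
      rw [expand, le_div_iff₀ (by positivity)]
      nlinarith [hsqL, sq_nonneg (r:ℝ)]
    have hY : (2*(r:ℝ)/(Real.exp 1*(L/2)))^2 ≤ (32/Real.exp 1)*((r:ℝ)/L)^2 := by
      have he3 : 2*(r:ℝ)/(Real.exp 1*(L/2)) = 4*(r:ℝ)/(Real.exp 1*L) := by
        field_simp
        ring
      rw [he3]
      have he4 : (4*(r:ℝ)/(Real.exp 1*L))^2 = 16*(r:ℝ)^2/(Real.exp 1^2*L^2) := by
        rw [div_pow]; ring_nf
      have he5 : (32/Real.exp 1)*((r:ℝ)/L)^2 = 32*(r:ℝ)^2/(Real.exp 1*L^2) := by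
        field_simp
      rw [he4, he5]
      apply div_le_div₀ (by positivity) ?_ (by positivity) ?_
      · nlinarith [sq_nonneg (r:ℝ),
          mul_nonneg (sub_nonneg.2 hone) (mul_nonneg hE.le (sq_nonneg L))]
      · nlinarith [sq_nonneg (r:ℝ),
          mul_nonneg (sub_nonneg.2 hone) (mul_nonneg hE.le (sq_nonneg L))]
    have hW : max (k*(r:ℝ)*Real.exp (L/2)/m) ((2*(r:ℝ)/(Real.exp 1*(L/2)))^2)
        ≤ (32/Real.exp 1)*((r:ℝ)/L)^2 := max_le hX hY
    have hWr : (max (k*(r:ℝ)*Real.exp (L/2)/m) ((2*(r:ℝ)/(Real.exp 1*(L/2)))^2))^r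
        ≤ ((32/Real.exp 1)*((r:ℝ)/L)^2)^r := by
      apply pow_le_pow_left₀ ?_ hW r
      exact le_trans (by positivity) (le_max_left _ _)
    have hV : ((32/Real.exp 1)*((r:ℝ)/L)^2)^r = (32/Real.exp 1)^r * ((r:ℝ)/L)^(2*r) := by
      rw [mul_pow, ← pow_mul]
    have hc2 : (32/Real.exp 1)^r ≤ ((32/Real.exp 1)^2)^r := by
      apply pow_le_pow_left₀ (by positivity)
      nlinarith [hc1, hE]
    calc Mfun m r k α β
        ≤ Real.exp ((m:ℝ)*Real.exp (-(2*(L/2)))/Real.exp 1) *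
          (max (k*(r:ℝ)*Real.exp (L/2)/m) ((2*(r:ℝ)/(Real.exp 1*(L/2)))^2))^r := hkey
      _ ≤ Real.exp 1 ^ r * (((32/Real.exp 1)^2)^r * ((r:ℝ)/L)^(2*r)) := by
          apply mul_le_mul hE1le ?_ (by positivity) (by positivity)
          refine le_trans hWr ?_
          rw [hV]
          exact mul_le_mul_of_nonneg_right hc2 hA0
      _ ≤ Real.exp 1 ^ r * (((32/Real.exp 1)^2)^r *
          max (((r:ℝ)/L)^(2*r)) ((k^2*(r:ℝ)/m) ^ ((r:ℝ)/2))) := by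
          apply mul_le_mul_of_nonneg_left ?_ (by positivity)
          exact mul_le_mul_of_nonneg_left (le_max_left _ _) (by positivity)
      _ = Real.exp 1 ^ r * ((32/Real.exp 1)^2)^r *
          max (((r:ℝ)/L)^(2*r)) ((k^2*(r:ℝ)/m) ^ ((r:ℝ)/2)) := by ring

end FH

namespace FH

theorem Mfun_bound :
    ∃ C : ℝ, 0 < C ∧
      ∀ k : ℝ, 1 ≤ k → ∀ m r : ℕ, 0 < m → 0 < r → r ≤ m →
        ∀ α β : ℕ, 1 ≤ β → 2*β ≤ α → α ≤ r →
          ((m:ℝ) * r ≤ k →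
            Mfun m r k α β ≤ (2:ℝ)^(C * r) * (k^2 * r / m)^((r:ℝ)/2)) ∧
          (k < (m:ℝ) * r →
            Mfun m r k α β ≤ (2:ℝ)^(C * r) *
              max (((r:ℝ) / Real.log (2 * Real.exp 1 * m * r / k))^(2*r))
                ((k^2 * r / m)^((r:ℝ)/2))) := by
  refine ⟨10, by norm_num, ?_⟩
  intro k hk m r hm hr hrm α β hβ hβα hαr
  have h1024 : (2:ℝ)^((10:ℝ)*r) = 1024^r := two_rpow_ten r
  have hexp1024 : Real.exp 1 ≤ 1024 := by
    nlinarith [Real.exp_one_lt_d9]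
  have hE : (0:ℝ) < Real.exp 1 := Real.exp_pos 1
  constructor
  · intro hkmr
    have h := case1 m r α β k hm hrm hβ hβα hαr hk hkmr
    have h2 : Real.exp 1 ^ r ≤ (1024:ℝ)^r :=
      pow_le_pow_left₀ hE.le hexp1024 r
    calc Mfun m r k α β ≤ Real.exp 1 ^ r * ((k^2*r/m) ^ ((r:ℝ)/2)) := h
      _ ≤ (1024:ℝ)^r * ((k^2*r/m) ^ ((r:ℝ)/2)) :=
          mul_le_mul_of_nonneg_right h2 (by positivity)
      _ = (2:ℝ)^((10:ℝ)*r) * ((k^2*r/m) ^ ((r:ℝ)/2)) := by rw [h1024]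
  · intro hkmr
    have h := case2 m r α β k hm hrm hβ hβα hαr hk hkmr
    have hcoef : Real.exp 1 ^ r * ((32/Real.exp 1)^2)^r ≤ (1024:ℝ)^r := by
      rw [← mul_pow]
      apply pow_le_pow_left₀ (by positivity)
      have h2e : Real.exp 2 = Real.exp 1 ^ 2 := by
        rw [← Real.exp_nat_mul]; norm_num
      have he : Real.exp 1 * (32/Real.exp 1)^2 = 1024/Real.exp 1 := by
        field_simp
        norm_num
      rw [he]
      calc (1024:ℝ)/Real.exp 1 ≤ 1024/1 := by
            apply div_le_div_of_nonneg_left (by norm_num) (by norm_num)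
              (Real.one_le_exp zero_le_one)
        _ = 1024 := by norm_num
    calc Mfun m r k α β
        ≤ Real.exp 1 ^ r * ((32/Real.exp 1)^2)^r *
          max (((r:ℝ) / Real.log (2 * Real.exp 1 * m * r / k))^(2*r))
            ((k^2 * r / m)^((r:ℝ)/2)) := h
      _ ≤ (1024:ℝ)^r *
          max (((r:ℝ) / Real.log (2 * Real.exp 1 * m * r / k))^(2*r))
            ((k^2 * r / m)^((r:ℝ)/2)) := by
          apply mul_le_mul_of_nonneg_right hcoef
          positivity
      _ = (2:ℝ)^((10:ℝ)*r) *
          max (((r:ℝ) / Real.log (2 * Real.exp 1 * m * r / k))^(2*r))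
            ((k^2 * r / m)^((r:ℝ)/2)) := by rw [h1024]

end FH
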